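/- Let X be a separable Hilbert space with a centered Gaussian measure γ and let U : X → ℝ be convex and continuous. Then e^{-U} belongs to L¹(X, γ). -/

import Mathlib

open MeasureTheory ProbabilityTheory Real

lemma integrable_exp_mul_gaussianReal (t μ : ℝ) (v : NNReal) :
    Integrable (fun x => Real.exp (t * x)) (gaussianReal μ v) := by
  by_cases hv : v = 0
  · subst hv
    rw [gaussianReal_zero_var]
    refine (integrable_const (Real.exp (t * μ))).congr ?_
    simp [Filter.EventuallyEq, ae_dirac_eq]
  · rw [gaussianReal_of_var_ne_zero _ hv, gaussianPDF_def,
      integrable_withDensity_iff (measurable_gaussianPDFReal μ v).ennreal_ofReal (ae_of_all _ fun _ => ENNReal.ofReal_lt_top)]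
    have hvpos : (0:ℝ) < (v:ℝ) := by positivity
    have key : (fun x : ℝ => Real.exp (t * x) * (ENNReal.ofReal (gaussianPDFReal μ v x)).toReal)
        = fun x : ℝ => ((Real.sqrt (2 * π * v))⁻¹ * Real.exp (t * μ + t ^ 2 * v / 2)) *
          Real.exp (-(2 * (v:ℝ))⁻¹ * (x - (μ + t * v)) ^ 2) := by
      funext x
      rw [ENNReal.toReal_ofReal (gaussianPDFReal_nonneg _ _ _)]
      unfold gaussianPDFReal
      rw [mul_left_comm, ← Real.exp_add, mul_assoc _ (Real.exp (t * μ + t ^ 2 * (v:ℝ) / 2)), ← Real.exp_add]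
      congr 1
      field_simp
      ring
    rw [key]
    exact ((integrable_exp_neg_mul_sq (by positivity)).comp_sub_right (μ + t * v)).const_mul _

theorem stmt3 {X : Type*} [NormedAddCommGroup X] [InnerProductSpace ℝ X] [CompleteSpace X]
    [MeasurableSpace X] [BorelSpace X] [SecondCountableTopology X]
    (γ : Measure X) [IsProbabilityMeasure γ] (V : X → NNReal)
    (hgauss : ∀ v : X, γ.map (fun w => (inner ℝ v w : ℝ)) = gaussianReal 0 (V v))
    (U : X → ℝ) (hU : ConvexOn ℝ Set.univ U) (hUc : Continuous U) :
    Integrable (fun x => Real.exp (-U x)) γ := by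
  -- affine minorant: ∃ z a, ∀ x, ⟪z, x⟫ + a ≤ U x
  obtain ⟨z, a, hza⟩ : ∃ (z : X) (a : ℝ), ∀ x, (inner ℝ z x : ℝ) + a ≤ U x := by
    -- separate the point (0, U 0 - 1) from the closed convex epigraph
    set E : Set (X × ℝ) := {p : X × ℝ | p.1 ∈ Set.univ ∧ U p.1 ≤ p.2} with hE
    have hEconv : Convex ℝ E := hU.convex_epigraph
    have hEclosed : IsClosed E := by
      have : E = {p : X × ℝ | U p.1 ≤ p.2} := by ext p; simp [hE]
      rw [this]
      exact isClosed_le (hUc.comp continuous_fst) continuous_snd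
    have hp : ((0 : X), U 0 - 1) ∉ E := by
      simp only [hE, Set.mem_setOf_eq, Set.mem_univ, true_and, not_le]
      linarith
    obtain ⟨f, u, hfu, hfE⟩ := geometric_hahn_banach_point_closed hEconv hEclosed hp
    set c : ℝ := f (0, 1) with hc
    have hsplit : ∀ (x : X) (t : ℝ), f (x, t) = f (x, 0) + t * c := by
      intro x t
      have : (x, t) = (x, (0:ℝ)) + t • ((0:X), (1:ℝ)) := by
        simp [Prod.ext_iff]
      rw [this, map_add, _root_.map_smul]
      simp [hc, smul_eq_mul]
    have hmem : ∀ x : X, (x, U x) ∈ E := fun x => ⟨Set.mem_univ x, le_refl _⟩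
    have hcpos : 0 < c := by
      rcases lt_trichotomy c 0 with h | h | h
      · -- take t very large, contradiction with u < f (0, t)
        have ht : ((0:X), max (U 0) ((u - 1) / c)) ∈ E := ⟨Set.mem_univ _, le_max_left _ _⟩
        have h1 := hfE _ ht
        have h0 : f ((0:X), (0:ℝ)) = 0 := by
          rw [show ((0:X), (0:ℝ)) = (0 : X × ℝ) from rfl, map_zero]
        rw [hsplit, h0, zero_add] at h1
        have h2 : (u - 1) / c ≤ max (U 0) ((u - 1) / c) := le_max_right _ _
        have h3 : max (U 0) ((u - 1) / c) * c ≤ u - 1 := by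
          have := mul_le_mul_of_nonpos_right h2 h.le
          rwa [div_mul_cancel₀ _ h.ne] at this
        linarith
      · -- c = 0 : both inequalities give a contradiction
        have h1 := hfE _ (hmem 0)
        have h2 := hfu
        have h0 : f ((0:X), (0:ℝ)) = 0 := by
          rw [show ((0:X), (0:ℝ)) = (0 : X × ℝ) from rfl, map_zero]
        rw [hsplit, h, mul_zero, add_zero, h0] at h1
        rw [hsplit, h, mul_zero, add_zero, h0] at h2
        linarith
      · exact h
    -- the linear part
    set g : X →L[ℝ] X × ℝ := ContinuousLinearMap.inl ℝ X ℝ with hg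
    set L : X →L[ℝ] ℝ := -(c⁻¹ • (f.comp g)) with hL
    refine ⟨(InnerProductSpace.toDual ℝ X).symm L, u / c, fun x => ?_⟩
    have h1 := hfE _ (hmem x)
    rw [hsplit] at h1
    have hLx : (inner ℝ ((InnerProductSpace.toDual ℝ X).symm L) x : ℝ) = -(c⁻¹ * f (x, 0)) := by
      rw [InnerProductSpace.toDual_symm_apply]
      simp [hL, hg]
    rw [hLx]
    have h2 : (-(c⁻¹ * f (x, 0)) + u / c) * c = -f (x, 0) + u := by
      field_simp
    have h3 : (-(c⁻¹ * f (x, 0)) + u / c) * c ≤ U x * c := by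
      rw [h2]; linarith
    exact (mul_le_mul_iff_of_pos_right hcpos).mp h3
  -- integrability of exp of the linear functional
  have hlin : Integrable (fun x => Real.exp (-(inner ℝ z x : ℝ))) γ := by
    have hmap := hgauss (-z)
    have h1 : Integrable (fun r : ℝ => Real.exp r) (gaussianReal 0 (V (-z))) := by
      simpa using integrable_exp_mul_gaussianReal 1 0 (V (-z))
    rw [← hmap] at h1
    have hmeas : AEMeasurable (fun w : X => (inner ℝ (-z) w : ℝ)) γ :=
      (innerSL ℝ (-z)).continuous.aemeasurable
    have := (integrable_map_measure (by
        exact (Real.continuous_exp.aestronglyMeasurable)) hmeas).mp h1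
    simpa [Function.comp_def, inner_neg_left] using this
  -- conclude by domination
  refine Integrable.mono' (hlin.const_mul (Real.exp (-a))) ?_ ?_
  · exact ((hUc.neg).rexp).aestronglyMeasurable
  · filter_upwards with x
    rw [Real.norm_eq_abs, abs_of_pos (Real.exp_pos _), ← Real.exp_add]
    exact Real.exp_le_exp.mpr (by linarith [hza x])
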